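/- For the multinomial distribution with parameters n and (p_1, p_2), the joint central moments of \hat{p}_i = f_i/n satisfy the partial-derivative identity ∂/∂p_1 \mu^M_{m,k} = -nm \mu^M_{m-1,k} + ((1-p_2)/(p_1 q)) \mu^M_{m+1,k} + (1/q) \mu^M_{m,k+1}, where q = 1 - p_1 - p_2 and \mu^M_{m,k} = E[(f_1 - np_1)^m (f_2 - np_2)^k]. -/

import Mathlib

/-- Unnormalized `(m,k)`-joint central moment of a multinomial `(f₁,f₂)`
with `n` trials and cell probabilities `(p₁,p₂)`:
`μᴹ_{m,k} = E[(f₁-np₁)^m (f₂-np₂)^k]`. -/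
noncomputable def multCentralMomentUnnorm (n m k : ℕ) (p₁ p₂ : ℝ) : ℝ :=
  ∑ x₁ ∈ Finset.range (n + 1), ∑ x₂ ∈ Finset.range (n - x₁ + 1),
    ((x₁ : ℝ) - (n : ℝ) * p₁) ^ m * ((x₂ : ℝ) - (n : ℝ) * p₂) ^ k *
      ((n.factorial : ℝ) /
        ((x₁.factorial : ℝ) * (x₂.factorial : ℝ) * ((n - x₁ - x₂).factorial : ℝ))) *
      p₁ ^ x₁ * p₂ ^ x₂ * (1 - p₁ - p₂) ^ (n - x₁ - x₂)

lemma cast_mul_pow_pred {p : ℝ} (hp : p ≠ 0) (x : ℕ) :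
    (x : ℝ) * p ^ (x - 1) = (x : ℝ) / p * p ^ x := by
  cases x with
  | zero => simp
  | succ s =>
      rw [Nat.add_sub_cancel, pow_succ]
      field_simp

lemma term_hasDerivAt (n x₁ x₂ m k : ℕ) (p₁ p₂ : ℝ) (hp₁ : p₁ ≠ 0)
    (hq : 1 - p₁ - p₂ ≠ 0) (hx : x₁ + x₂ ≤ n) :
    HasDerivAt (fun p : ℝ =>
      ((x₁ : ℝ) - (n : ℝ) * p) ^ m * ((x₂ : ℝ) - (n : ℝ) * p₂) ^ k *
        ((n.factorial : ℝ) /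
          ((x₁.factorial : ℝ) * (x₂.factorial : ℝ) * ((n - x₁ - x₂).factorial : ℝ))) *
        p ^ x₁ * p₂ ^ x₂ * (1 - p - p₂) ^ (n - x₁ - x₂))
      ( -(n : ℝ) * (m : ℝ) *
          (((x₁ : ℝ) - (n : ℝ) * p₁) ^ (m - 1) * ((x₂ : ℝ) - (n : ℝ) * p₂) ^ k *
            ((n.factorial : ℝ) /
              ((x₁.factorial : ℝ) * (x₂.factorial : ℝ) * ((n - x₁ - x₂).factorial : ℝ))) *
            p₁ ^ x₁ * p₂ ^ x₂ * (1 - p₁ - p₂) ^ (n - x₁ - x₂))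
        + ((1 - p₂) / (p₁ * (1 - p₁ - p₂))) *
          (((x₁ : ℝ) - (n : ℝ) * p₁) ^ (m + 1) * ((x₂ : ℝ) - (n : ℝ) * p₂) ^ k *
            ((n.factorial : ℝ) /
              ((x₁.factorial : ℝ) * (x₂.factorial : ℝ) * ((n - x₁ - x₂).factorial : ℝ))) *
            p₁ ^ x₁ * p₂ ^ x₂ * (1 - p₁ - p₂) ^ (n - x₁ - x₂))
        + (1 / (1 - p₁ - p₂)) *
          (((x₁ : ℝ) - (n : ℝ) * p₁) ^ m * ((x₂ : ℝ) - (n : ℝ) * p₂) ^ (k + 1) *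
            ((n.factorial : ℝ) /
              ((x₁.factorial : ℝ) * (x₂.factorial : ℝ) * ((n - x₁ - x₂).factorial : ℝ))) *
            p₁ ^ x₁ * p₂ ^ x₂ * (1 - p₁ - p₂) ^ (n - x₁ - x₂)) ) p₁ := by
  have h1 : HasDerivAt (fun p : ℝ => ((x₁ : ℝ) - (n : ℝ) * p) ^ m)
      ((m : ℝ) * ((x₁ : ℝ) - (n : ℝ) * p₁) ^ (m - 1) * (0 - (n : ℝ) * 1)) p₁ :=
    ((hasDerivAt_const p₁ ((x₁ : ℝ))).sub ((hasDerivAt_id p₁).const_mul (n : ℝ))).pow m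
  have h6 : HasDerivAt (fun p : ℝ => (1 - p - p₂) ^ (n - x₁ - x₂))
      (((n - x₁ - x₂ : ℕ) : ℝ) * (1 - p₁ - p₂) ^ (n - x₁ - x₂ - 1) * ((0 - 1) - 0)) p₁ :=
    (((hasDerivAt_const p₁ (1:ℝ)).sub (hasDerivAt_id p₁)).sub (hasDerivAt_const p₁ p₂)).pow _
  have H := (((((h1.mul_const (((x₂ : ℝ) - (n : ℝ) * p₂) ^ k)).mul_const
      ((n.factorial : ℝ) /
        ((x₁.factorial : ℝ) * (x₂.factorial : ℝ) * ((n - x₁ - x₂).factorial : ℝ)))).fun_mul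
      (hasDerivAt_pow x₁ p₁)).mul_const (p₂ ^ x₂)).fun_mul h6)
  convert H using 1
  case e'_4 => rfl
  case e'_5 => rfl
  have hr : ((n - x₁ - x₂ : ℕ) : ℝ) = (n : ℝ) - (x₁ : ℝ) - (x₂ : ℝ) := by
    have h1 : x₁ ≤ n := le_trans (Nat.le_add_right _ _) hx
    rw [Nat.cast_sub (by omega), Nat.cast_sub (by omega)]
  rw [cast_mul_pow_pred hp₁ x₁, cast_mul_pow_pred hq (n - x₁ - x₂), hr]
  generalize ((n.factorial : ℝ) /
      ((x₁.factorial : ℝ) * (x₂.factorial : ℝ) * ((n - x₁ - x₂).factorial : ℝ))) = C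
  field_simp
  ring

/-- Partial-derivative identity for the unnormalized multinomial central moments. -/
theorem multCentralMomentUnnorm_deriv (n : ℕ) (p₁ p₂ : ℝ)
    (hp₁ : 0 < p₁) (hp₂ : 0 < p₂) (hsum : p₁ + p₂ < 1) (m k : ℕ) :
    deriv (fun q : ℝ => multCentralMomentUnnorm n m k q p₂) p₁ =
      -(n : ℝ) * (m : ℝ) * multCentralMomentUnnorm n (m - 1) k p₁ p₂
      + ((1 - p₂) / (p₁ * (1 - p₁ - p₂))) * multCentralMomentUnnorm n (m + 1) k p₁ p₂
      + (1 / (1 - p₁ - p₂)) * multCentralMomentUnnorm n m (k + 1) p₁ p₂ := by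
  have hq : (1 : ℝ) - p₁ - p₂ ≠ 0 := by linarith
  have H := HasDerivAt.fun_sum (fun x₁ (hx₁ : x₁ ∈ Finset.range (n + 1)) =>
    HasDerivAt.fun_sum (fun x₂ (hx₂ : x₂ ∈ Finset.range (n - x₁ + 1)) =>
      term_hasDerivAt n x₁ x₂ m k p₁ p₂ hp₁.ne' hq (by
        simp only [Finset.mem_range] at hx₁ hx₂; omega)))
  simp only [multCentralMomentUnnorm]
  rw [H.deriv]
  simp only [Finset.mul_sum, ← Finset.sum_add_distrib]
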